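/- Let G be a finite p-group of order p^5 of nilpotency class 2 with Z(G) = G' elementary abelian of order p². Then G has an abelian subgroup of index p. -/

import Mathlib

open scoped commutatorElement
variable {G : Type*}

/-- An automorphism is class-preserving if it sends each element to a conjugate of itself. -/
def IsClassPreserving [Group G] (α : G ≃* G) : Prop :=
  ∀ x : G, ∃ g : G, α x = g⁻¹ * x * g

/-- An automorphism is inner if it is conjugation by a fixed element. -/
def IsInnerAut [Group G] (α : G ≃* G) : Prop :=
  ∃ g : G, ∀ x : G, α x = g⁻¹ * x * g

/-- An automorphism is central if it induces the identity on `G/Z(G)`. -/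
def IsCentralAut [Group G] (α : G ≃* G) : Prop :=
  ∀ x : G, x⁻¹ * α x ∈ Subgroup.center G

section Aux

variable {H : Type*} [Group H]

private lemma comm_right_aux (a b c : H) (h : ∀ g : H, g * ⁅a, c⁆ = ⁅a, c⁆ * g) :
    ⁅a, b * c⁆ = ⁅a, b⁆ * ⁅a, c⁆ := by
  rw [commutatorElement_def a b, mul_assoc (a * b * a⁻¹) b⁻¹ ⁅a, c⁆, h b⁻¹]
  simp only [commutatorElement_def]
  group

private def commHomAux (hc : ∀ a b : H, ⁅a, b⁆ ∈ Subgroup.center H) (x : H) : H →* H :=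
  MonoidHom.mk' (fun b => ⁅x, b⁆) fun b c =>
    comm_right_aux x b c fun g => Subgroup.mem_center_iff.mp (hc x c) g

private lemma commHomAux_apply (hc : ∀ a b : H, ⁅a, b⁆ ∈ Subgroup.center H) (x b : H) :
    commHomAux hc x b = ⁅x, b⁆ := rfl

private lemma comm_mul_right_aux (hc : ∀ a b : H, ⁅a, b⁆ ∈ Subgroup.center H) (x b c : H) :
    ⁅x, b * c⁆ = ⁅x, b⁆ * ⁅x, c⁆ := (commHomAux hc x).map_mul b c

private lemma comm_zpow_right_aux (hc : ∀ a b : H, ⁅a, b⁆ ∈ Subgroup.center H) (x b : H)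
    (n : ℤ) : ⁅x, b ^ n⁆ = ⁅x, b⁆ ^ n := map_zpow (commHomAux hc x) b n

private lemma comm_zpow_left_aux (hc : ∀ a b : H, ⁅a, b⁆ ∈ Subgroup.center H) (x b : H)
    (n : ℤ) : ⁅x ^ n, b⁆ = ⁅x, b⁆ ^ n := by
  rw [← commutatorElement_inv b (x ^ n), comm_zpow_right_aux hc b x n,
    ← commutatorElement_inv b x]
  exact (inv_zpow _ _).symm

private lemma comm_mul_left_aux (hc : ∀ a b : H, ⁅a, b⁆ ∈ Subgroup.center H) (g h k : H) :
    ⁅g * h, k⁆ = ⁅g, k⁆ * ⁅h, k⁆ := by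
  calc ⁅g * h, k⁆ = ⁅k, g * h⁆⁻¹ := (commutatorElement_inv k (g * h)).symm
    _ = (⁅k, g⁆ * ⁅k, h⁆)⁻¹ := by rw [comm_mul_right_aux hc k g h]
    _ = ⁅k, h⁆⁻¹ * ⁅k, g⁆⁻¹ := mul_inv_rev _ _
    _ = ⁅h, k⁆ * ⁅g, k⁆ := by rw [commutatorElement_inv, commutatorElement_inv]
    _ = ⁅g, k⁆ * ⁅h, k⁆ := (Subgroup.mem_center_iff.mp (hc h k) ⁅g, k⁆).symm

private lemma closure_pair_aux {x y z : H} (h : Commute x y)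
    (hz : z ∈ Subgroup.closure ({x, y} : Set H)) :
    ∃ m n : ℤ, x ^ m * y ^ n = z := by
  induction hz using Subgroup.closure_induction with
  | mem g hg =>
    rw [Set.mem_insert_iff, Set.mem_singleton_iff] at hg
    rcases hg with rfl | rfl
    · exact ⟨1, 0, by simp⟩
    · exact ⟨0, 1, by simp⟩
  | one => exact ⟨0, 0, by simp⟩
  | mul a b _ _ iha ihb =>
    obtain ⟨m, n, rfl⟩ := iha
    obtain ⟨m', n', rfl⟩ := ihb
    refine ⟨m + m', n + n', ?_⟩
    have hcomm : y ^ n * x ^ m' = x ^ m' * y ^ n := ((h.zpow_zpow m' n).symm).eq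
    calc x ^ (m + m') * y ^ (n + n') = x ^ m * (x ^ m' * y ^ n) * y ^ n' := by
          rw [zpow_add, zpow_add]; simp [mul_assoc]
      _ = x ^ m * (y ^ n * x ^ m') * y ^ n' := by rw [hcomm]
      _ = x ^ m * y ^ n * (x ^ m' * y ^ n') := by simp [mul_assoc]
  | inv a _ iha =>
    obtain ⟨m, n, rfl⟩ := iha
    refine ⟨-m, -n, ?_⟩
    rw [zpow_neg, zpow_neg, mul_inv_rev]
    exact ((h.zpow_zpow m n).inv_inv).eq

private lemma abelian_of_pair {H : Type*} [Group H] [Finite H] (p : ℕ) [Fact p.Prime]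
    (hord : Nat.card H = p ^ 5)
    (hc : ∀ a b : H, ⁅a, b⁆ ∈ Subgroup.center H)
    (hZcard : Nat.card (Subgroup.center H) = p ^ 2)
    (helem : ∀ z ∈ Subgroup.center H, z ^ p = 1)
    (u v : H) (hu : u ∉ Subgroup.center H)
    (huv : u * v = v * u)
    (hv : (QuotientGroup.mk' (Subgroup.center H)) v ∉
      Subgroup.zpowers ((QuotientGroup.mk' (Subgroup.center H)) u)) :
    ∃ A : Subgroup H, A.index = p ∧ ∀ x ∈ A, ∀ y ∈ A, x * y = y * x := by
  have hp : p.Prime := Fact.out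
  set Z := Subgroup.center H with hZdef
  set A := Subgroup.closure (({u, v} : Set H) ∪ (Z : Set H)) with hAdef
  have key : ∀ x y : H, x ∈ A → y ∈ A → Commute x y := by
    intro x y hx hy
    induction hx, hy using Subgroup.closure_induction₂ with
    | mem a b ha hb =>
      rcases ha with ha | ha
      · rcases hb with hb | hb
        · rw [Set.mem_insert_iff, Set.mem_singleton_iff] at ha hb
          rcases ha with rfl | rfl <;> rcases hb with rfl | rfl <;>
            first
            | exact Commute.refl _
            | exact huv
            | exact Commute.symm huv
        · exact Subgroup.mem_center_iff.mp hb a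
      · exact (Subgroup.mem_center_iff.mp ha b).symm
    | one_left b hb => exact Commute.one_left b
    | one_right b hb => exact Commute.one_right b
    | mul_left a b c _ _ _ h1 h2 => exact h1.mul_left h2
    | mul_right a b c _ _ _ h1 h2 => exact h1.mul_right h2
    | inv_left a b _ _ h => exact h.inv_left
    | inv_right a b _ _ h => exact h.inv_right
  have hZA : Z ≤ A := fun z hz => Subgroup.subset_closure (Or.inr hz)
  have huA : u ∈ A := Subgroup.subset_closure (Or.inl (Set.mem_insert _ _))
  have hvA : v ∈ A := Subgroup.subset_closure (Or.inl (Set.mem_insert_of_mem _ rfl))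
  have hAne : A ≠ ⊤ := by
    intro h
    apply hu
    rw [hZdef, Subgroup.mem_center_iff]
    intro g
    have hg : g ∈ A := by rw [h]; trivial
    exact (key u g huA hg).eq.symm
  -- card of the quotient
  have hQcard : Nat.card (H ⧸ Z) = p ^ 3 := by
    have h1 : Nat.card Z * Z.index = Nat.card H := Subgroup.card_mul_index Z
    rw [hZcard, hord] at h1
    have h2 : Z.index = p ^ 3 := by
      have hpos : 0 < p ^ 2 := pow_pos hp.pos 2
      apply Nat.eq_of_mul_eq_mul_left hpos
      rw [h1]; ring
    rw [← h2]; rfl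
  have hpZ : ∀ g : H, g ^ p ∈ Z := by
    intro g
    rw [hZdef, Subgroup.mem_center_iff]
    intro h
    have h2 : ⁅h, g ^ p⁆ = 1 := by
      have h3 := comm_zpow_right_aux hc h g (p : ℤ)
      rw [zpow_natCast, zpow_natCast] at h3
      rw [h3]
      exact helem _ (hc h g)
    exact commutatorElement_eq_one_iff_commute.mp h2
  have hmkp : ∀ g : H, ((QuotientGroup.mk' Z) g) ^ p = 1 := by
    intro g
    rw [← map_pow]
    exact (QuotientGroup.eq_one_iff _).mpr (hpZ g)
  have hune : (QuotientGroup.mk' Z) u ≠ 1 := by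
    intro h
    exact hu ((QuotientGroup.eq_one_iff u).mp h)
  have horder : orderOf ((QuotientGroup.mk' Z) u) = p := orderOf_eq_prime (hmkp u) hune
  set P := Subgroup.map (QuotientGroup.mk' Z) A with hP
  have hup : (QuotientGroup.mk' Z) u ∈ P := ⟨u, huA, rfl⟩
  have hvp : (QuotientGroup.mk' Z) v ∈ P := ⟨v, hvA, rfl⟩
  have hPdvd : Nat.card P ∣ p ^ 3 := hQcard ▸ Subgroup.card_subgroup_dvd_card P
  have hzleP : Subgroup.zpowers ((QuotientGroup.mk' Z) u) ≤ P := Subgroup.zpowers_le.mpr hup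
  have hzcard : Nat.card (Subgroup.zpowers ((QuotientGroup.mk' Z) u)) = p := by
    rw [Nat.card_zpowers, horder]
  have hPp : p ∣ Nat.card P := hzcard ▸ Subgroup.card_dvd_of_le hzleP
  have hPnep : Nat.card P ≠ p := by
    intro h
    have heq : Subgroup.zpowers ((QuotientGroup.mk' Z) u) = P :=
      Subgroup.eq_of_le_of_card_ge hzleP (by rw [h, hzcard])
    rw [← heq] at hvp
    exact hv hvp
  have hP2 : p ^ 2 ≤ Nat.card P := by
    obtain ⟨k, hk3, hkeq⟩ := (Nat.dvd_prime_pow hp).mp hPdvd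
    match k, hkeq with
    | 0, hkeq => simp only [pow_zero] at hkeq; rw [hkeq] at hPp
                 exact absurd (Nat.le_of_dvd one_pos hPp) (by have := hp.one_lt; omega)
    | 1, hkeq => rw [pow_one] at hkeq; exact absurd hkeq hPnep
    | (k+2), hkeq => rw [hkeq]; exact Nat.pow_le_pow_right hp.pos (by omega)
  -- card A
  have hsub : Nat.card (Z.subgroupOf A) = p ^ 2 := by
    rw [← hZcard]
    exact Nat.card_congr (Subgroup.subgroupOfEquivOfLe hZA).toEquiv
  have hrel : Z.relIndex A = Nat.card P := by
    have h1 := Subgroup.relIndex_ker (QuotientGroup.mk' Z) (K := A)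
    rw [QuotientGroup.ker_mk'] at h1
    exact h1
  have hAcard : Nat.card A = p ^ 2 * Nat.card P := by
    have h2 : Nat.card (Z.subgroupOf A) * (Z.subgroupOf A).index = Nat.card A :=
      Subgroup.card_mul_index (Z.subgroupOf A)
    calc Nat.card A = p ^ 2 * (Z.subgroupOf A).index := by rw [← h2, hsub]
      _ = p ^ 2 * Z.relIndex A := rfl
      _ = p ^ 2 * Nat.card P := by rw [hrel]
  have hA4 : p ^ 4 ≤ Nat.card A := by
    rw [hAcard]
    calc p ^ 4 = p ^ 2 * p ^ 2 := by ring
      _ ≤ p ^ 2 * Nat.card P := Nat.mul_le_mul_left _ hP2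
  have hAdvd : Nat.card A ∣ p ^ 5 := hord ▸ Subgroup.card_subgroup_dvd_card A
  obtain ⟨k, hk5, hkeq⟩ := (Nat.dvd_prime_pow hp).mp hAdvd
  have hk4 : 4 ≤ k := by
    by_contra hcon
    push_neg at hcon
    have h1 : Nat.card A ≤ p ^ 3 := by
      rw [hkeq]; exact Nat.pow_le_pow_right hp.pos (by omega)
    have h2 : p ^ 3 < p ^ 4 := Nat.pow_lt_pow_right hp.one_lt (by omega)
    omega
  have hk5' : k ≠ 5 := by
    intro h
    exact hAne (Subgroup.eq_top_of_card_eq A (by rw [hkeq, h, hord]))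
  have hkk : k = 4 := by omega
  have hAcard4 : Nat.card A = p ^ 4 := by rw [hkeq, hkk]
  have hfin : Nat.card A * A.index = p ^ 5 := by rw [Subgroup.card_mul_index A, hord]
  have hidx : A.index = p := by
    have hpos : 0 < p ^ 4 := pow_pos hp.pos 4
    apply Nat.eq_of_mul_eq_mul_left hpos
    calc p ^ 4 * A.index = Nat.card A * A.index := by rw [hAcard4]
      _ = p ^ 5 := hfin
      _ = p ^ 4 * p := by ring
  exact ⟨A, hidx, fun x hx y hy => (key x y hx hy).eq⟩

end Aux

/-- A group of order p^5 of class 2 with center equal to the commutator subgroup,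
elementary abelian of order p², has an abelian subgroup of index p. -/
theorem stmt_5 (G : Type*) [Group G] [Finite G] (p : ℕ) [Fact p.Prime]
    (hord : Nat.card G = p ^ 5)
    (hclass2 : commutator G ≤ Subgroup.center G)
    (hZG' : Subgroup.center G = commutator G)
    (hZcard : Nat.card (Subgroup.center G) = p ^ 2)
    (helem : ∀ z ∈ Subgroup.center G, z ^ p = 1) :
    ∃ A : Subgroup G, A.index = p ∧ ∀ x ∈ A, ∀ y ∈ A, x * y = y * x := by
  have hp : p.Prime := Fact.out
  have hc : ∀ a b : G, ⁅a, b⁆ ∈ Subgroup.center G := fun a b =>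
    hclass2 ((commutator_def G) ▸
      Subgroup.commutator_mem_commutator (Subgroup.mem_top a) (Subgroup.mem_top b))
  -- there is a non-central element
  obtain ⟨x, hx⟩ : ∃ x : G, x ∉ Subgroup.center G := by
    by_contra hcon
    push_neg at hcon
    have htop : Subgroup.center G = ⊤ := (Subgroup.eq_top_iff' _).mpr hcon
    have h1 : Nat.card (Subgroup.center G) = Nat.card G := by
      rw [htop]; exact Nat.card_congr Subgroup.topEquiv.toEquiv
    rw [hZcard, hord] at h1
    have h2 : p ^ 2 < p ^ 5 := Nat.pow_lt_pow_right hp.one_lt (by omega)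
    omega
  set φ := commHomAux hc x with hφ
  by_cases hR : Subgroup.center G ≤ φ.range
  · -- the commutator map with x is surjective onto the center
    obtain ⟨a, ha⟩ : ∃ a : G, ⁅x, a⁆ ≠ 1 := by
      by_contra hcon
      push_neg at hcon
      apply hx
      rw [Subgroup.mem_center_iff]
      intro g
      exact (commutatorElement_eq_one_iff_commute.mp (hcon g)).eq.symm
    set z1 := ⁅x, a⁆ with hz1def
    have hz1Z : z1 ∈ Subgroup.center G := hc x a
    have hz1ord : orderOf z1 = p := orderOf_eq_prime (helem _ hz1Z) ha
    have hzp1 : Subgroup.zpowers z1 ≤ Subgroup.center G := Subgroup.zpowers_le.mpr hz1Z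
    have hcard1 : Nat.card (Subgroup.zpowers z1) = p := by rw [Nat.card_zpowers, hz1ord]
    obtain ⟨z2, hz2Z, hz2⟩ : ∃ z2 ∈ Subgroup.center G, z2 ∉ Subgroup.zpowers z1 := by
      by_contra hcon
      push_neg at hcon
      have hle : Subgroup.center G ≤ Subgroup.zpowers z1 := hcon
      have h1 := Subgroup.card_le_of_le hle
      rw [hZcard, hcard1] at h1
      have h2 : p ^ 1 < p ^ 2 := Nat.pow_lt_pow_right hp.one_lt (by omega)
      rw [pow_one] at h2
      omega
    have hz12 : Commute z1 z2 := (Subgroup.mem_center_iff.mp hz1Z z2).symm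
    set Hc := Subgroup.closure ({z1, z2} : Set G) with hHcdef
    have hHle : Hc ≤ Subgroup.center G := by
      rw [hHcdef, Subgroup.closure_le]
      intro g hg
      rw [Set.mem_insert_iff, Set.mem_singleton_iff] at hg
      rcases hg with rfl | rfl
      · exact hz1Z
      · exact hz2Z
    have hz1H : z1 ∈ Hc := Subgroup.subset_closure (Set.mem_insert _ _)
    have hz2H : z2 ∈ Hc := Subgroup.subset_closure (Set.mem_insert_of_mem _ rfl)
    have hzleH : Subgroup.zpowers z1 ≤ Hc := Subgroup.zpowers_le.mpr hz1H
    have hHdvd : Nat.card Hc ∣ p ^ 2 := hZcard ▸ Subgroup.card_dvd_of_le hHle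
    have hpH : p ∣ Nat.card Hc := hcard1 ▸ Subgroup.card_dvd_of_le hzleH
    have hHnep : Nat.card Hc ≠ p := by
      intro h
      have heq : Subgroup.zpowers z1 = Hc :=
        Subgroup.eq_of_le_of_card_ge hzleH (by rw [h, hcard1])
      exact hz2 (by rw [heq]; exact hz2H)
    have hHcard : Nat.card Hc = p ^ 2 := by
      obtain ⟨j, hj2, hjeq⟩ := (Nat.dvd_prime_pow hp).mp hHdvd
      match j, hjeq with
      | 0, hjeq => rw [pow_zero] at hjeq; rw [hjeq] at hpH
                   exact absurd (Nat.le_of_dvd one_pos hpH) (by have := hp.one_lt; omega)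
      | 1, hjeq => rw [pow_one] at hjeq; exact absurd hjeq hHnep
      | 2, hjeq => rw [hjeq]
    have hHeq : Hc = Subgroup.center G :=
      Subgroup.eq_of_le_of_card_ge hHle (by rw [hHcard, hZcard])
    obtain ⟨b, hb⟩ := hR hz2Z
    have hxb : ⁅x, b⁆ = z2 := hb
    have habH : ⁅a, b⁆ ∈ Hc := by rw [hHeq]; exact hc a b
    obtain ⟨m, n, hmn⟩ := closure_pair_aux hz12 habH
    set u := a * x ^ (-n : ℤ) with hudef
    set v := b * x ^ (m : ℤ) with hvdef
    have hxu : ⁅x, u⁆ = z1 := by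
      rw [hudef, comm_mul_right_aux hc, comm_zpow_right_aux hc, commutatorElement_self,
        one_zpow, mul_one]
    have hxv : ⁅x, v⁆ = z2 := by
      rw [hvdef, comm_mul_right_aux hc, comm_zpow_right_aux hc, commutatorElement_self,
        one_zpow, mul_one, hxb]
    have huv1 : ⁅u, v⁆ = 1 := by
      have e1 : ⁅u, v⁆ = ⁅a, v⁆ * ⁅x ^ (-n : ℤ), v⁆ := comm_mul_left_aux hc _ _ _
      have e2 : ⁅a, v⁆ = ⁅a, b⁆ * ⁅a, x⁆ ^ (m : ℤ) := by
        rw [hvdef, comm_mul_right_aux hc, comm_zpow_right_aux hc]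
      have e3 : ⁅x ^ (-n : ℤ), v⁆ = ⁅x, v⁆ ^ (-n : ℤ) := comm_zpow_left_aux hc _ _ _
      have e4 : ⁅a, x⁆ = z1⁻¹ := by rw [← commutatorElement_inv, hz1def]
      rw [e1, e2, e3, e4, hxv, ← hmn]
      have hcz : z2 ^ (n : ℤ) * z1 ^ (-m : ℤ) = z1 ^ (-m : ℤ) * z2 ^ (n : ℤ) :=
        ((hz12.zpow_zpow (-m : ℤ) (n : ℤ)).symm).eq
      calc z1 ^ m * z2 ^ n * (z1⁻¹ ^ (m : ℤ)) * z2 ^ (-n : ℤ)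
          = z1 ^ m * (z2 ^ n * z1 ^ (-m : ℤ)) * z2 ^ (-n : ℤ) := by
            rw [inv_zpow, ← zpow_neg]; simp [mul_assoc]
        _ = z1 ^ m * (z1 ^ (-m : ℤ) * z2 ^ n) * z2 ^ (-n : ℤ) := by rw [hcz]
        _ = (z1 ^ m * z1 ^ (-m : ℤ)) * (z2 ^ n * z2 ^ (-n : ℤ)) := by simp [mul_assoc]
        _ = 1 := by rw [← zpow_add, ← zpow_add]; simp
    have huZ : u ∉ Subgroup.center G := by
      intro hmem
      apply ha
      rw [← hxu] at ha ⊢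
      exact commutatorElement_eq_one_iff_commute.mpr
        (Subgroup.mem_center_iff.mp hmem x)
    have hvq : (QuotientGroup.mk' (Subgroup.center G)) v ∉
        Subgroup.zpowers ((QuotientGroup.mk' (Subgroup.center G)) u) := by
      intro hmem
      obtain ⟨k, hk⟩ := Subgroup.mem_zpowers_iff.mp hmem
      rw [← map_zpow] at hk
      have hcen : (u ^ k)⁻¹ * v ∈ Subgroup.center G := by
        have h0 : (QuotientGroup.mk' (Subgroup.center G)) ((u ^ k)⁻¹ * v) = 1 := by
          rw [map_mul, map_inv, hk]; simp
        exact (QuotientGroup.eq_one_iff _).mp h0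
      have h1 : ⁅x, (u ^ k)⁻¹ * v⁆ = 1 :=
        commutatorElement_eq_one_iff_commute.mpr
          (Subgroup.mem_center_iff.mp hcen x)
      have h2 : ⁅x, (u ^ k)⁻¹ * v⁆ = z1 ^ (-k : ℤ) * z2 := by
        rw [comm_mul_right_aux hc, ← zpow_neg, comm_zpow_right_aux hc, hxu, hxv]
      rw [h2] at h1
      apply hz2
      have h3 : z2 = z1 ^ (k : ℤ) := by
        have h4 : z2 = (z1 ^ (-k : ℤ))⁻¹ := by
          rw [eq_inv_of_mul_eq_one_left h1, inv_inv]
        rw [h4, ← zpow_neg, neg_neg]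
      exact ⟨k, h3.symm⟩
    exact abelian_of_pair p hord hc hZcard helem u v huZ
      (commutatorElement_eq_one_iff_commute.mp huv1).eq hvq
  · -- the commutator map with x is not surjective onto the center
    have hRle : φ.range ≤ Subgroup.center G := by
      rintro y ⟨g, rfl⟩
      exact hc x g
    have hRcard : Nat.card φ.range ∣ p ^ 2 := hZcard ▸ Subgroup.card_dvd_of_le hRle
    have hRne : Nat.card φ.range ≠ p ^ 2 := by
      intro h
      exact hR (Subgroup.eq_of_le_of_card_ge hRle (by rw [h, hZcard])).ge
    have hRdvdp : Nat.card φ.range ∣ p := by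
      obtain ⟨j, hj2, hjeq⟩ := (Nat.dvd_prime_pow hp).mp hRcard
      have hj1 : j ≤ 1 := by
        by_contra hcon
        push_neg at hcon
        have : j = 2 := by omega
        rw [this] at hjeq
        exact hRne hjeq
      rw [hjeq]
      calc p ^ j ∣ p ^ 1 := pow_dvd_pow p hj1
        _ = p := pow_one p
    have hkerind : φ.ker.index ∣ p := by
      rw [Subgroup.index_ker]
      exact hRdvdp
    -- the subgroup W = preimage of ⟨x mod Z⟩
    have hpZ : ∀ g : G, g ^ p ∈ Subgroup.center G := by
      intro g
      rw [Subgroup.mem_center_iff]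
      intro h
      have h2 : ⁅h, g ^ p⁆ = 1 := by
        have h3 := comm_zpow_right_aux hc h g (p : ℤ)
        rw [zpow_natCast, zpow_natCast] at h3
        rw [h3]
        exact helem _ (hc h g)
      exact commutatorElement_eq_one_iff_commute.mp h2
    have hQcard : Nat.card (G ⧸ Subgroup.center G) = p ^ 3 := by
      have h1 : Nat.card (Subgroup.center G) * (Subgroup.center G).index = Nat.card G :=
        Subgroup.card_mul_index _
      rw [hZcard, hord] at h1
      have h2 : (Subgroup.center G).index = p ^ 3 := by
        have hpos : 0 < p ^ 2 := pow_pos hp.pos 2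
        apply Nat.eq_of_mul_eq_mul_left hpos
        rw [h1]; ring
      rw [← h2]; rfl
    have hmkp : ((QuotientGroup.mk' (Subgroup.center G)) x) ^ p = 1 := by
      rw [← map_pow]
      exact (QuotientGroup.eq_one_iff _).mpr (hpZ x)
    have hune : (QuotientGroup.mk' (Subgroup.center G)) x ≠ 1 := by
      intro h
      exact hx ((QuotientGroup.eq_one_iff x).mp h)
    have horder : orderOf ((QuotientGroup.mk' (Subgroup.center G)) x) = p :=
      orderOf_eq_prime hmkp hune
    set W := Subgroup.comap (QuotientGroup.mk' (Subgroup.center G))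
      (Subgroup.zpowers ((QuotientGroup.mk' (Subgroup.center G)) x)) with hWdef
    have hWind : W.index = p ^ 2 := by
      have h1 : W.index =
          (Subgroup.zpowers ((QuotientGroup.mk' (Subgroup.center G)) x)).index :=
        Subgroup.index_comap_of_surjective _ (QuotientGroup.mk'_surjective _)
      have h2 : Nat.card (Subgroup.zpowers ((QuotientGroup.mk' (Subgroup.center G)) x)) *
          (Subgroup.zpowers ((QuotientGroup.mk' (Subgroup.center G)) x)).index =
          Nat.card (G ⧸ Subgroup.center G) := Subgroup.card_mul_index _
      rw [Nat.card_zpowers, horder, hQcard] at h2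
      rw [h1]
      have hpos : 0 < p := hp.pos
      apply Nat.eq_of_mul_eq_mul_left hpos
      rw [h2]; ring
    have hnotle : ¬ (φ.ker ≤ W) := by
      intro hle
      have h1 := Subgroup.index_dvd_of_le hle
      rw [hWind] at h1
      have h2 : p ^ 2 ∣ p := h1.trans hkerind
      have h3 : p ^ 2 ≤ p := Nat.le_of_dvd hp.pos h2
      have h4 : p ^ 1 < p ^ 2 := Nat.pow_lt_pow_right hp.one_lt (by omega)
      rw [pow_one] at h4
      omega
    obtain ⟨y, hyker, hyW⟩ := SetLike.not_le_iff_exists.mp hnotle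
    have hxy : ⁅x, y⁆ = 1 := hyker
    have hyq : (QuotientGroup.mk' (Subgroup.center G)) y ∉
        Subgroup.zpowers ((QuotientGroup.mk' (Subgroup.center G)) x) := by
      intro h
      exact hyW (Subgroup.mem_comap.mpr h)
    exact abelian_of_pair p hord hc hZcard helem x y hx
      (commutatorElement_eq_one_iff_commute.mp hxy).eq hyq
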